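/- Let f be a time-varying vector field on E = EuclideanSpace ℝ (Fin n) with f(·,t) C¹ for each t and f(0,t) = 0 for all t. Suppose V : ℝ × E × E → ℝ satisfies c₁‖y‖^p ≤ V(t,x,y) ≤ c₂‖y‖^p for constants c₁,c₂ > 0, p ≥ 1, and along every lifted solution (x(·),y(·)) of the complete lift of f the function t ↦ V(t,x(t),y(t)) is differentiable with derivative at most −k V(t,x(t),y(t)) for some k > 0. Let h : E → E be a C¹ vector field with (D_x f(x,t))(h(x)) = (Dh(x))(f(x,t)) for all x,t, and suppose k₁‖x‖^q ≤ ‖h(x)‖ ≤ k₂‖x‖^q for constants k₁,k₂ > 0 and q ≥ 1. Define W(t,x) = V(t,x,h(x)). Then c₁k₁^p ‖x‖^{pq} ≤ W(t,x) ≤ c₂k₂^p ‖x‖^{pq} for all t,x, and along every solution x(·) of ẋ = f(x,t) starting at any (t₀,x₀), the function t ↦ W(t,x(t)) is differentiable with derivative at most −k W(t,x(t)) for all t ≥ t₀; consequently W(t,x(t)) ≤ e^{−k(t−t₀)} W(t₀,x₀). -/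

import Mathlib

noncomputable section

/-- The Euclidean state space. -/
abbrev E (n : ℕ) := EuclideanSpace ℝ (Fin n)

/-- `x` is a solution of `ẋ = f(x,t)` starting at `(t₀, x₀)`. -/
def IsSolution {n : ℕ} (f : E n → ℝ → E n) (t₀ : ℝ) (x₀ : E n) (x : ℝ → E n) : Prop :=
  x t₀ = x₀ ∧ ∀ t, t₀ ≤ t → HasDerivAt x (f (x t) t) t

/-- `(x, y)` is a lifted solution of the complete lift of `f`, starting at `(t₀, x₀, y₀)`:
`ẋ = f(x,t)`, `ẏ = (D_x f(x,t)) y`. -/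
def IsLiftedSolution {n : ℕ} (f : E n → ℝ → E n) (t₀ : ℝ) (x₀ y₀ : E n)
    (x y : ℝ → E n) : Prop :=
  IsSolution f t₀ x₀ x ∧ y t₀ = y₀ ∧
    ∀ t, t₀ ≤ t → HasDerivAt y (fderiv ℝ (fun z => f z t) (x t) (y t)) t

/-- Krasovskii-type construction: if `V` is a Finsler–Lyapunov function decaying at rate
`k` along lifted solutions and `h` is a commuting vector field (`[f,h] = 0`) with
`k₁‖x‖^q ≤ ‖h(x)‖ ≤ k₂‖x‖^q`, then `W(t,x) = V(t,x,h(x))` is a Lyapunov function: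
`c₁k₁^p ‖x‖^{pq} ≤ W(t,x) ≤ c₂k₂^p ‖x‖^{pq}`, `Ẇ ≤ −kW` along solutions, and hence
`W(t,x(t)) ≤ e^{−k(t−t₀)} W(t₀,x₀)`. -/
theorem krasovskii_extension {n : ℕ} (f : E n → ℝ → E n)
    (hf : ∀ t, ContDiff ℝ 1 (fun z => f z t))
    (hf0 : ∀ t, f 0 t = 0)
    (V : ℝ → E n → E n → ℝ) (c₁ c₂ p k : ℝ)
    (hc₁ : 0 < c₁) (hc₂ : 0 < c₂) (hp : 1 ≤ p) (hk : 0 < k)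
    (hVlow : ∀ t x y, c₁ * ‖y‖ ^ p ≤ V t x y)
    (hVup : ∀ t x y, V t x y ≤ c₂ * ‖y‖ ^ p)
    (hVdec : ∀ (t₀ : ℝ) (x₀ y₀ : E n) (x y : ℝ → E n),
      IsLiftedSolution f t₀ x₀ y₀ x y →
      ∀ t, t₀ ≤ t → ∃ d : ℝ,
        HasDerivAt (fun s => V s (x s) (y s)) d t ∧ d ≤ -k * V t (x t) (y t))
    (h : E n → E n) (hh : ContDiff ℝ 1 h)
    (hbracket : ∀ (x : E n) (t : ℝ),
      fderiv ℝ (fun z => f z t) x (h x) = fderiv ℝ h x (f x t))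
    (k₁ k₂ q : ℝ) (hk₁ : 0 < k₁) (hk₂ : 0 < k₂) (hq : 1 ≤ q)
    (hhlow : ∀ x : E n, k₁ * ‖x‖ ^ q ≤ ‖h x‖)
    (hhup : ∀ x : E n, ‖h x‖ ≤ k₂ * ‖x‖ ^ q)
    (W : ℝ → E n → ℝ) (hW : ∀ t x, W t x = V t x (h x)) :
    (∀ (t : ℝ) (x : E n),
      c₁ * k₁ ^ p * ‖x‖ ^ (p * q) ≤ W t x ∧ W t x ≤ c₂ * k₂ ^ p * ‖x‖ ^ (p * q)) ∧
    (∀ (t₀ : ℝ) (x₀ : E n) (x : ℝ → E n), IsSolution f t₀ x₀ x →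
      (∀ t, t₀ ≤ t → ∃ d : ℝ,
        HasDerivAt (fun s => W s (x s)) d t ∧ d ≤ -k * W t (x t)) ∧
      (∀ t, t₀ ≤ t → W t (x t) ≤ Real.exp (-k * (t - t₀)) * W t₀ x₀)) := by
  have hxpq : ∀ (x : E n) (c : ℝ), 0 < c → (c * ‖x‖ ^ q) ^ p = c ^ p * ‖x‖ ^ (p * q) := by
    intro x c hc
    rw [Real.mul_rpow hc.le (Real.rpow_nonneg (norm_nonneg x) q),
      ← Real.rpow_mul (norm_nonneg x), mul_comm p q]
  have hbound : ∀ (t : ℝ) (x : E n),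
      c₁ * k₁ ^ p * ‖x‖ ^ (p * q) ≤ W t x ∧ W t x ≤ c₂ * k₂ ^ p * ‖x‖ ^ (p * q) := by
    intro t x
    have h1 : (k₁ * ‖x‖ ^ q) ^ p ≤ ‖h x‖ ^ p :=
      Real.rpow_le_rpow (by positivity) (hhlow x) (by linarith)
    have h2 : ‖h x‖ ^ p ≤ (k₂ * ‖x‖ ^ q) ^ p :=
      Real.rpow_le_rpow (norm_nonneg _) (hhup x) (by linarith)
    rw [hxpq x k₁ hk₁] at h1
    rw [hxpq x k₂ hk₂] at h2
    constructor
    · calc c₁ * k₁ ^ p * ‖x‖ ^ (p * q) = c₁ * (k₁ ^ p * ‖x‖ ^ (p * q)) := by ring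
        _ ≤ c₁ * ‖h x‖ ^ p := by
            exact mul_le_mul_of_nonneg_left h1 hc₁.le
        _ ≤ W t x := by rw [hW]; exact hVlow t x (h x)
    · calc W t x ≤ c₂ * ‖h x‖ ^ p := by rw [hW]; exact hVup t x (h x)
        _ ≤ c₂ * (k₂ ^ p * ‖x‖ ^ (p * q)) := mul_le_mul_of_nonneg_left h2 hc₂.le
        _ = c₂ * k₂ ^ p * ‖x‖ ^ (p * q) := by ring
  refine ⟨hbound, ?_⟩
  intro t₀ x₀ x hx
  -- the lifted solution
  have hlift : IsLiftedSolution f t₀ x₀ (h x₀) x (fun s => h (x s)) := by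
    refine ⟨hx, by show h (x t₀) = h x₀; rw [hx.1], ?_⟩
    intro t ht
    have hfd : HasFDerivAt h (fderiv ℝ h (x t)) (x t) :=
      ((hh.differentiable one_ne_zero) (x t)).hasFDerivAt
    have := hfd.comp_hasDerivAt t (hx.2 t ht)
    rw [hbracket (x t) t]
    exact this
  have hWdec : ∀ t, t₀ ≤ t → ∃ d : ℝ,
      HasDerivAt (fun s => W s (x s)) d t ∧ d ≤ -k * W t (x t) := by
    intro t ht
    obtain ⟨d, hd, hdle⟩ := hVdec t₀ x₀ (h x₀) x (fun s => h (x s)) hlift t ht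
    refine ⟨d, ?_, ?_⟩
    · simpa only [hW] using hd
    · rw [hW]; exact hdle
  refine ⟨hWdec, ?_⟩
  -- Gronwall
  set g : ℝ → ℝ := fun s => W s (x s) with hg
  set F : ℝ → ℝ := fun s => Real.exp (k * (s - t₀)) * g s with hF
  have hFderiv : ∀ t, t₀ ≤ t → ∃ d : ℝ, HasDerivAt F d t ∧ d ≤ 0 := by
    intro t ht
    obtain ⟨d, hd, hdle⟩ := hWdec t ht
    have he : HasDerivAt (fun s => Real.exp (k * (s - t₀)))
        (Real.exp (k * (t - t₀)) * k) t := by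
      have : HasDerivAt (fun s => k * (s - t₀)) k t := by
        simpa using ((hasDerivAt_id t).sub_const t₀).const_mul k
      simpa [mul_comm] using this.exp
    have hFd : HasDerivAt F (Real.exp (k * (t - t₀)) * k * g t
        + Real.exp (k * (t - t₀)) * d) t := he.mul hd
    refine ⟨_, hFd, ?_⟩
    have h1 : k * g t + d ≤ 0 := by
      have := hdle; simp only [hg]; nlinarith
    have h2 : Real.exp (k * (t - t₀)) * (k * g t + d) ≤ 0 :=
      mul_nonpos_of_nonneg_of_nonpos (Real.exp_pos _).le h1
    nlinarith [Real.exp_pos (k * (t - t₀))]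
  have hanti : AntitoneOn F (Set.Ici t₀) := by
    apply antitoneOn_of_deriv_nonpos (convex_Ici t₀)
    · intro t ht
      obtain ⟨d, hd, _⟩ := hFderiv t ht
      exact hd.continuousAt.continuousWithinAt
    · intro t ht
      rw [interior_Ici] at ht
      obtain ⟨d, hd, _⟩ := hFderiv t ht.le
      exact hd.differentiableAt.differentiableWithinAt
    · intro t ht
      rw [interior_Ici] at ht
      obtain ⟨d, hd, hdle⟩ := hFderiv t ht.le
      rw [hd.deriv]; exact hdle
  intro t ht
  have hFt : F t ≤ F t₀ := hanti Set.self_mem_Ici ht ht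
  have hF0 : F t₀ = W t₀ x₀ := by simp [hF, hg, hx.1]
  rw [hF0] at hFt
  have hexp : 0 < Real.exp (k * (t - t₀)) := Real.exp_pos _
  have : g t ≤ Real.exp (-k * (t - t₀)) * W t₀ x₀ := by
    have h2 : Real.exp (-k * (t - t₀)) * (Real.exp (k * (t - t₀)) * g t)
        ≤ Real.exp (-k * (t - t₀)) * W t₀ x₀ :=
      mul_le_mul_of_nonneg_left hFt (Real.exp_pos _).le
    have h3 : Real.exp (-k * (t - t₀)) * Real.exp (k * (t - t₀)) = 1 := by
      rw [← Real.exp_add]; ring_nf; exact Real.exp_zero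
    calc g t = Real.exp (-k * (t - t₀)) * (Real.exp (k * (t - t₀)) * g t) := by
          rw [← mul_assoc, h3, one_mul]
      _ ≤ Real.exp (-k * (t - t₀)) * W t₀ x₀ := h2
  exact this
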